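/- Let k ≥ 1, set d = 2k+1, and let π be a (d−1)-partition. Let W_π ∈ ℤ[t₁^{±1},…,t_{2k}^{±1}] be W_π = Σ_{i₁,…,i_{2k} ≥ 1} Σ_{m=1}^{π(i₁,…,i_{2k})} t₁^{i₁−1}⋯t_{2k}^{i_{2k}−1}·(t₁⋯t_{2k})^{−(m−1)}, and set V_π := W_π − W̄_π + W_π·W̄_π·(1−t₁)⋯(1−t_{2k})·(1−(t₁⋯t_{2k})⁻¹). Write V_π = Σ_{w ∈ ℤ^{2k}} a_w·t^w with finitely many a_w ≠ 0. Then a₀ = 0, and in the rational function field ℚ(λ₁,…,λ_{2k}) one has Π_{w ≠ 0} (w₁λ₁ + ⋯ + w_{2k}λ_{2k})^{a_w} = (−1)^{|π|}. -/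

import Mathlib

/-!
STATEMENT 4: Let k ≥ 1, d = 2k+1, π a (d−1)-partition, and in
ℤ[t₁^{±1},…,t_{2k}^{±1}] set
W_π = Σ_{i₁,…,i_{2k} ≥ 1} Σ_{m=1}^{π(i)} t₁^{i₁−1}⋯t_{2k}^{i_{2k}−1}·(t₁⋯t_{2k})^{−(m−1)},
V_π := W_π − W̄_π + W_π·W̄_π·(1−t₁)⋯(1−t_{2k})·(1−(t₁⋯t_{2k})⁻¹) = Σ_w a_w·t^w.
Then a₀ = 0 and Π_{w ≠ 0} (w₁λ₁+⋯+w_{2k}λ_{2k})^{a_w} = (−1)^{|π|} in ℚ(λ₁,…,λ_{2k}).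

The Laurent ring is modelled as `AddMonoidAlgebra ℤ (Fin (2*k) → ℤ)`, with the bar
involution induced by negation on exponents; partitions are modelled 0-indexed, so
W_π = Σ_{i ∈ ℕ^{2k}} Σ_{m=0}^{π(i)−1} t^i·(t₁⋯t_{2k})^{−m}.  The field
ℚ(λ₁,…,λ_{2k}) is the fraction field of `MvPolynomial (Fin (2*k)) ℚ`, and the
product (with integer exponents, via `zpow`) is a `finprod` over all w ≠ 0.
-/

/-- An `n`-partition: a function π : ℕⁿ → ℕ (0-indexed version of (ℤ_{≥1})ⁿ → ℕ),
weakly decreasing in each coordinate and with finite support. -/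
structure NPartition (n : ℕ) where
  toFun : (Fin n → ℕ) → ℕ
  antitone : ∀ ⦃i j : Fin n → ℕ⦄, (∀ a, i a ≤ j a) → toFun j ≤ toFun i
  finite : (Function.support toFun).Finite

/-- The size |π| = Σ_i π(i). -/
noncomputable def NPartition.size {n : ℕ} (π : NPartition n) : ℕ := ∑ᶠ i, π.toFun i

/-- Laurent polynomials ℤ[t₁^{±1},…,t_n^{±1}]. -/
abbrev Laurent (n : ℕ) := AddMonoidAlgebra ℤ (Fin n → ℤ)

/-- The bar involution tᵢ ↦ tᵢ⁻¹, i.e. the ring automorphism induced by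
negation on exponents. -/
noncomputable def bar (n : ℕ) : Laurent n ≃ₐ[ℤ] Laurent n :=
  AddMonoidAlgebra.domCongr ℤ ℤ (AddEquiv.neg (Fin n → ℤ))

/-- The variable tᵢ. -/
noncomputable def tvar {n : ℕ} (i : Fin n) : Laurent n :=
  AddMonoidAlgebra.single (Pi.single i 1) 1

/-- The monomial (t₁⋯t_n)⁻¹ = t₁⁻¹⋯t_n⁻¹. -/
noncomputable def sInv (n : ℕ) : Laurent n := AddMonoidAlgebra.single (fun _ => (-1 : ℤ)) 1

/-- The character W_π of the monomial subscheme attached to a 2k-partition π, after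
the Calabi–Yau specialization t_{2k+1} = (t₁⋯t_{2k})⁻¹. -/
noncomputable def Wpi (k : ℕ) (π : NPartition (2 * k)) : Laurent (2 * k) :=
  ∑ᶠ i : Fin (2 * k) → ℕ, ∑ m ∈ Finset.range (π.toFun i),
    AddMonoidAlgebra.single (fun a => (i a : ℤ) - (m : ℤ)) (1 : ℤ)

/-- The equivariant vertex V_π (after the Calabi–Yau specialization). -/
noncomputable def Vpi (k : ℕ) (π : NPartition (2 * k)) : Laurent (2 * k) :=
  Wpi k π - bar _ (Wpi k π) +
    Wpi k π * bar _ (Wpi k π) * ((∏ i, (1 - tvar i)) * (1 - sInv (2 * k)))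

/-- The field ℚ(λ₁,…,λ_n). -/
abbrev RatFn (n : ℕ) := FractionRing (MvPolynomial (Fin n) ℚ)

/-- The variable λᵢ of ℚ(λ₁,…,λ_n). -/
noncomputable def lam {n : ℕ} (i : Fin n) : RatFn n :=
  algebraMap (MvPolynomial (Fin n) ℚ) (RatFn n) (MvPolynomial.X i)

namespace CK

open Finset

/-! ### generic Laurent lemmas -/

lemma bar_single {n : ℕ} (x : Fin n → ℤ) (a : ℤ) :
    (bar n) (AddMonoidAlgebra.single x a) = AddMonoidAlgebra.single (-x) a :=
  AddMonoidAlgebra.domCongr_single (AddEquiv.neg (Fin n → ℤ)) x a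

lemma bar_apply {n : ℕ} (f : Laurent n) (w : Fin n → ℤ) :
    (bar n f).coeff w = f.coeff (-w) := by
  simp [bar, AddMonoidAlgebra.coeff_domCongr]

lemma bar_bar {n : ℕ} (f : Laurent n) : bar n (bar n f) = f := by
  apply AddMonoidAlgebra.ext; apply Finsupp.ext; intro w
  rw [bar_apply, bar_apply, neg_neg]

def chi {n : ℕ} (s : Finset (Fin n)) : Fin n → ℤ := fun a => if a ∈ s then 1 else 0

lemma prod_one_sub_tvar {n : ℕ} (u : Finset (Fin n)) :
    (∏ i ∈ u, (1 - tvar i) : Laurent n) =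
      ∑ s ∈ u.powerset, AddMonoidAlgebra.single (chi s) ((-1) ^ s.card : ℤ) := by
  classical
  induction u using Finset.induction_on with
  | empty =>
      rw [Finset.prod_empty, Finset.powerset_empty, Finset.sum_singleton]
      have : chi (∅ : Finset (Fin n)) = 0 := by funext a; simp [chi]
      rw [this]; simp [AddMonoidAlgebra.one_def]
  | @insert a u ha ih =>
      rw [Finset.prod_insert ha, ih, Finset.sum_powerset_insert ha, sub_mul, one_mul,
        Finset.mul_sum]
      have key : ∀ s ∈ u.powerset,
          tvar a * AddMonoidAlgebra.single (chi s) ((-1) ^ s.card : ℤ)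
            = - AddMonoidAlgebra.single (chi (insert a s)) ((-1) ^ (insert a s).card : ℤ) := by
        intro s hs
        have has : a ∉ s := fun h => ha (Finset.mem_powerset.1 hs h)
        have hchi : Pi.single a 1 + chi s = chi (insert a s) := by
          funext x
          by_cases hx : x = a
          · subst hx; simp [chi, has, Pi.single_apply]
          · simp [chi, Pi.single_apply, hx]
        rw [Finset.card_insert_of_notMem has, pow_succ]
        show AddMonoidAlgebra.single (Pi.single a 1) 1 * _ = _
        rw [AddMonoidAlgebra.single_mul_single, one_mul, hchi]
        rw [mul_neg_one,
          show AddMonoidAlgebra.single (chi (insert a s)) (-((-1:ℤ) ^ s.card))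
              = - AddMonoidAlgebra.single (chi (insert a s)) ((-1:ℤ) ^ s.card) from
            AddMonoidAlgebra.single_neg _ _, neg_neg]
      rw [Finset.sum_congr rfl key, Finset.sum_neg_distrib, sub_neg_eq_add]

lemma bar_prod_one_sub_tvar {n : ℕ} (hn : Even n) :
    bar n (∏ i, (1 - tvar i)) = sInv n * ∏ i, (1 - tvar i) := by
  classical
  rw [prod_one_sub_tvar, map_sum, Finset.mul_sum]
  simp_rw [bar_single]
  show _ = ∑ s ∈ _, AddMonoidAlgebra.single (fun _ => (-1:ℤ)) 1 * _
  simp_rw [AddMonoidAlgebra.single_mul_single, one_mul]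
  refine Finset.sum_bij' (fun s _ => sᶜ) (fun s _ => sᶜ) ?_ ?_ ?_ ?_ ?_
  · intro s _; exact Finset.mem_powerset.2 (Finset.subset_univ _)
  · intro s _; exact Finset.mem_powerset.2 (Finset.subset_univ _)
  · intro s _; simp
  · intro s _; simp
  · intro s _
    have h1 : ((fun _ => (-1:ℤ)) + chi sᶜ) = -(chi s) := by
      funext x
      by_cases hx : x ∈ s <;> simp [chi, hx]
    have hc : sᶜ.card = n - s.card := by
      rw [Finset.card_compl]; simp
    have h2 : ((-1 : ℤ)) ^ sᶜ.card = (-1) ^ s.card := by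
      rw [hc]
      have hle : s.card ≤ n := by
        simpa using Finset.card_le_card (Finset.subset_univ s)
      have h3 : ((-1:ℤ)) ^ (n - s.card) * (-1) ^ s.card = 1 := by
        rw [← pow_add, Nat.sub_add_cancel hle]
        exact Even.neg_one_pow hn
      have h4 : ((-1:ℤ)) ^ s.card * (-1) ^ s.card = 1 := by
        rw [← mul_pow]; norm_num
      calc ((-1:ℤ)) ^ (n - s.card) = (-1:ℤ) ^ (n - s.card) * ((-1) ^ s.card * (-1) ^ s.card) := by
            rw [h4, mul_one]
        _ = ((-1:ℤ) ^ (n - s.card) * (-1) ^ s.card) * (-1) ^ s.card := by ring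
        _ = (-1) ^ s.card := by rw [h3, one_mul]
    rw [h1, h2]


/-! ### box combinatorics -/

variable (k : ℕ) (π : NPartition (2 * k))

noncomputable def SS : Finset (Fin (2*k) → ℕ) := π.finite.toFinset

noncomputable def BB : Finset ((Fin (2*k) → ℕ) × ℕ) :=
  (SS k π ×ˢ Finset.range ((SS k π).sup π.toFun)).filter fun b => b.2 < π.toFun b.1

def ee {k : ℕ} (b : (Fin (2*k) → ℕ) × ℕ) : Fin (2*k) → ℤ := fun a => (b.1 a : ℤ) - (b.2 : ℤ)

lemma mem_SS {i : Fin (2*k) → ℕ} : i ∈ SS k π ↔ π.toFun i ≠ 0 := by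
  simp [SS, Set.Finite.mem_toFinset, Function.mem_support]

lemma mem_BB {b : (Fin (2*k) → ℕ) × ℕ} : b ∈ BB k π ↔ b.2 < π.toFun b.1 := by
  constructor
  · intro h; exact (Finset.mem_filter.1 h).2
  · intro h
    refine Finset.mem_filter.2 ⟨Finset.mem_product.2 ⟨?_, ?_⟩, h⟩
    · exact (mem_SS k π).2 (by omega)
    · exact Finset.mem_range.2 (lt_of_lt_of_le h (Finset.le_sup ((mem_SS k π).2 (by omega))))

lemma sum_BB {M : Type*} [AddCommMonoid M] (f : (Fin (2*k) → ℕ) × ℕ → M) :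
    ∑ b ∈ BB k π, f b = ∑ i ∈ SS k π, ∑ m ∈ Finset.range (π.toFun i), f (i, m) := by
  rw [BB, Finset.sum_filter, Finset.sum_product]
  refine Finset.sum_congr rfl fun i hi => ?_
  have hN : π.toFun i ≤ (SS k π).sup π.toFun := Finset.le_sup hi
  rw [← Finset.sum_filter]
  congr 1
  ext m
  simp only [Finset.mem_filter, Finset.mem_range]
  exact ⟨fun h => h.2, fun h => ⟨lt_of_lt_of_le h hN, h⟩⟩

lemma card_BB : (BB k π).card = π.size := by
  rw [NPartition.size,
    finsum_eq_sum_of_support_subset _ (s := SS k π) (fun i hi => by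
      simpa [SS, Set.Finite.mem_toFinset] using hi)]
  rw [Finset.card_eq_sum_ones, sum_BB]
  simp

lemma W_eq : Wpi k π = ∑ b ∈ BB k π, AddMonoidAlgebra.single (ee b) 1 := by
  rw [Wpi, sum_BB k π (fun b => AddMonoidAlgebra.single (ee b) (1:ℤ))]
  refine finsum_eq_sum_of_support_subset _ fun i hi => ?_
  rw [Function.mem_support] at hi
  refine Finset.mem_coe.2 ((mem_SS k π).2 fun h => hi ?_)
  rw [h]
  simp

lemma barW_eq : bar _ (Wpi k π) = ∑ b ∈ BB k π, AddMonoidAlgebra.single (-(ee b)) 1 := by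
  rw [W_eq, map_sum]
  exact Finset.sum_congr rfl fun b _ => bar_single _ _

/-! ### the polynomial G with V = G - bar G -/

noncomputable def QQ : Laurent (2*k) :=
  Wpi k π * bar _ (Wpi k π) * ∏ i, (1 - tvar i)

noncomputable def GG : Laurent (2*k) := Wpi k π + QQ k π

lemma V_eq : Vpi k π = GG k π - bar _ (GG k π) := by
  rw [GG, QQ, Vpi, map_add, map_mul, map_mul, bar_bar,
    bar_prod_one_sub_tvar (even_two_mul k)]
  ring

lemma V_apply (w : Fin (2*k) → ℤ) :
    (Vpi k π).coeff w = (GG k π).coeff w - (GG k π).coeff (-w) := by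
  rw [V_eq]
  show ((GG k π).coeff - (bar _ (GG k π)).coeff) w = _
  rw [Finsupp.sub_apply, bar_apply]

lemma Q_eq : QQ k π = ∑ b ∈ BB k π, ∑ b' ∈ BB k π, ∑ s ∈ (Finset.univ : Finset (Fin (2*k))).powerset,
    AddMonoidAlgebra.single (ee b - ee b' + chi s) ((-1) ^ s.card : ℤ) := by
  rw [QQ, barW_eq, W_eq, prod_one_sub_tvar, Finset.sum_mul_sum, Finset.sum_mul]
  refine Finset.sum_congr rfl fun b _ => ?_
  rw [Finset.sum_mul]
  refine Finset.sum_congr rfl fun b' _ => ?_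
  rw [Finset.mul_sum]
  refine Finset.sum_congr rfl fun s _ => ?_
  rw [AddMonoidAlgebra.single_mul_single, AddMonoidAlgebra.single_mul_single]
  have h1 : ee b + -(ee b') + chi s = ee b - ee b' + chi s := by
    funext a; simp [sub_eq_add_neg]
  rw [h1, one_mul, one_mul]

/-! ### the augmentation -/

noncomputable def eps {n : ℕ} : Laurent n →+ ℤ :=
  (Finsupp.liftAddHom fun _ => AddMonoidHom.id ℤ).comp AddMonoidAlgebra.coeffAddEquiv.toAddMonoidHom

lemma eps_single {n : ℕ} (x : Fin n → ℤ) (a : ℤ) : eps (AddMonoidAlgebra.single x a) = a :=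
  Finsupp.liftAddHom_apply_single _ _ _

lemma eps_W : eps (Wpi k π) = π.size := by
  rw [W_eq, map_sum, ← card_BB k π]
  simp [eps_single]

lemma eps_Q (hk : 1 ≤ k) : eps (QQ k π) = 0 := by
  rw [Q_eq, map_sum]
  have : ∀ b ∈ BB k π, eps (∑ b' ∈ BB k π, ∑ s ∈ (Finset.univ : Finset (Fin (2*k))).powerset,
      AddMonoidAlgebra.single (ee b - ee b' + chi s) ((-1) ^ s.card : ℤ)) = 0 := by
    intro b _
    rw [map_sum]
    refine Finset.sum_eq_zero fun b' _ => ?_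
    rw [map_sum]
    have : ∀ s ∈ (Finset.univ : Finset (Fin (2*k))).powerset,
        eps (AddMonoidAlgebra.single (ee b - ee b' + chi s) ((-1) ^ s.card : ℤ)) = (-1:ℤ)^s.card :=
      fun s _ => eps_single _ _
    rw [Finset.sum_congr rfl this, Finset.sum_powerset_neg_one_pow_card, if_neg]
    have : Nonempty (Fin (2*k)) := ⟨⟨0, by omega⟩⟩
    exact Finset.univ_nonempty.ne_empty
  rw [Finset.sum_congr rfl this]
  simp

lemma eps_G (hk : 1 ≤ k) : eps (GG k π) = π.size := by
  rw [GG, map_add, eps_W, eps_Q k π hk, add_zero]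


/-! ### coefficients at 0 -/

lemma W_apply (w : Fin (2*k) → ℤ) :
    (Wpi k π).coeff w = ((BB k π).filter fun b => ee b = w).card := by
  classical
  rw [W_eq, AddMonoidAlgebra.coeff_sum, Finset.sum_apply', ← Finset.sum_boole]
  exact Finset.sum_congr rfl fun b _ => Finsupp.single_apply

noncomputable def FF0 : Finset ((Fin (2*k) → ℕ) × ℕ) :=
  (BB k π).filter fun b => ee b = (0 : Fin (2*k) → ℤ)

lemma sum_chi {n : ℕ} (v : Fin n → ℤ) :
    (∑ s ∈ (Finset.univ : Finset (Fin n)).powerset, if chi s = v then (1 : ZMod 2) else 0)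
      = if (∀ a, v a = 0 ∨ v a = 1) then 1 else 0 := by
  classical
  by_cases hv : ∀ a, v a = 0 ∨ v a = 1
  · rw [if_pos hv]
    have hs0 : chi (Finset.univ.filter fun a => v a = 1) = v := by
      funext a; rcases hv a with h | h <;> simp [chi, h]
    have key : ∀ s ∈ (Finset.univ : Finset (Fin n)).powerset,
        (if chi s = v then (1 : ZMod 2) else 0)
          = if s = Finset.univ.filter (fun a => v a = 1) then (1 : ZMod 2) else 0 := by
      intro s _
      refine if_congr ⟨fun h => ?_, fun h => by rw [h, hs0]⟩ rfl rfl
      ext a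
      simp only [Finset.mem_filter, Finset.mem_univ, true_and]
      constructor
      · intro ha; rw [← h]; simp [chi, ha]
      · intro ha
        by_contra hna
        have : chi s a = 0 := by simp [chi, hna]
        rw [h] at this; rw [this] at ha; norm_num at ha
    rw [Finset.sum_congr rfl key, Finset.sum_ite_eq', if_pos]
    exact Finset.mem_powerset.2 (Finset.subset_univ _)
  · rw [if_neg hv]
    refine Finset.sum_eq_zero fun s _ => if_neg fun h => hv ?_
    intro a
    rw [← h]
    by_cases ha : a ∈ s <;> simp [chi, ha]

def PT {k : ℕ} (x : ((Fin (2*k) → ℕ) × ℕ) × ((Fin (2*k) → ℕ) × ℕ)) : Prop :=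
  ∀ a, (ee x.2 - ee x.1) a = 0 ∨ (ee x.2 - ee x.1) a = 1

instance {k : ℕ} : DecidablePred (PT (k := k)) := fun x => by unfold PT; infer_instance

noncomputable def TT : Finset (((Fin (2*k) → ℕ) × ℕ) × ((Fin (2*k) → ℕ) × ℕ)) :=
  (BB k π ×ˢ BB k π).filter PT

lemma Q_zero_mod2 :
    (((QQ k π).coeff 0 : ℤ) : ZMod 2) = (TT k π).card := by
  classical
  have h1 : ((QQ k π).coeff 0)
      = ∑ b ∈ BB k π, ∑ b' ∈ BB k π, ∑ s ∈ (Finset.univ : Finset (Fin (2*k))).powerset,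
          (if ee b - ee b' + chi s = 0 then ((-1:ℤ)) ^ s.card else 0) := by
    rw [Q_eq, AddMonoidAlgebra.coeff_sum, Finset.sum_apply']
    refine Finset.sum_congr rfl fun b _ => ?_
    rw [AddMonoidAlgebra.coeff_sum, Finset.sum_apply']
    refine Finset.sum_congr rfl fun b' _ => ?_
    rw [AddMonoidAlgebra.coeff_sum, Finset.sum_apply']
    exact Finset.sum_congr rfl fun s _ => Finsupp.single_apply
  rw [h1]
  push_cast
  have h2 : ∀ b ∈ BB k π, ∀ b' ∈ BB k π,
      (∑ s ∈ (Finset.univ : Finset (Fin (2*k))).powerset,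
        (if ee b - ee b' + chi s = 0 then ((-1 : ZMod 2)) ^ s.card else 0))
      = if PT (b, b') then (1 : ZMod 2) else 0 := by
    intro b _ b' _
    have hneg : (-1 : ZMod 2) = 1 := by decide
    have key : ∀ s ∈ (Finset.univ : Finset (Fin (2*k))).powerset,
        (if ee b - ee b' + chi s = 0 then ((-1 : ZMod 2)) ^ s.card else 0)
          = if chi s = ee b' - ee b then (1 : ZMod 2) else 0 := by
      intro s _
      rw [hneg, one_pow]
      refine if_congr ?_ rfl rfl
      constructor
      · intro h; funext a
        have := congrFun h a
        simp only [Pi.add_apply, Pi.sub_apply, Pi.zero_apply] at this ⊢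
        omega
      · intro h; funext a
        have := congrFun h a
        simp only [Pi.add_apply, Pi.sub_apply, Pi.zero_apply] at this ⊢
        omega
    rw [Finset.sum_congr rfl key, sum_chi]
    rfl
  rw [Finset.sum_congr rfl (fun b hb => Finset.sum_congr rfl fun b' hb' => h2 b hb b' hb')]
  rw [← Finset.sum_product']
  rw [TT, Finset.sum_boole]

/-! ### parity via involutions -/

lemma card_filter_mod2 {X : Type*} (s : Finset X) (p : X → Prop) [DecidablePred p]
    (ι : X → X)
    (h1 : ∀ x ∈ s, ¬ p x → ι x ∈ s)
    (h1' : ∀ x ∈ s, ¬ p x → ¬ p (ι x))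
    (h2 : ∀ x ∈ s, ¬ p x → ι (ι x) = x)
    (h3 : ∀ x ∈ s, ¬ p x → ι x ≠ x) :
    ((s.card : ZMod 2)) = ((s.filter p).card : ZMod 2) := by
  classical
  have hsplit := Finset.card_filter_add_card_filter_not (s := s) (p := p)
  have hzero : (((s.filter fun x => ¬ p x).card : ZMod 2)) = 0 := by
    rw [Finset.card_eq_sum_ones, Nat.cast_sum]
    refine Finset.sum_involution (fun a _ => ι a) ?_ ?_ ?_ ?_
    · intro a _; decide
    · intro a ha _
      exact h3 a (Finset.mem_filter.1 ha).1 (Finset.mem_filter.1 ha).2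
    · intro a ha
      have := Finset.mem_filter.1 ha
      exact Finset.mem_filter.2 ⟨h1 a this.1 this.2, h1' a this.1 this.2⟩
    · intro a ha
      have := Finset.mem_filter.1 ha
      exact h2 a this.1 this.2
  have : ((s.card : ZMod 2)) = ((s.filter p).card : ZMod 2) + ((s.filter fun x => ¬ p x).card : ZMod 2) := by
    rw [← Nat.cast_add, hsplit]
  rw [this, hzero, add_zero]


/-! ### first involution: TT ≡ Fix1 (mod 2) -/

def CaseA {k : ℕ} (π : NPartition (2*k)) (x : ((Fin (2*k) → ℕ) × ℕ) × ((Fin (2*k) → ℕ) × ℕ)) : Prop :=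
  (π.toFun x.1.1 : ℤ) - x.1.2 < (π.toFun x.2.1 : ℤ) - x.2.2

instance {k : ℕ} (π : NPartition (2*k)) : DecidablePred (CaseA π) := fun x => by
  unfold CaseA; infer_instance

def FixP {k : ℕ} (π : NPartition (2*k)) (x : ((Fin (2*k) → ℕ) × ℕ) × ((Fin (2*k) → ℕ) × ℕ)) : Prop :=
  x.1.2 = 0 ∧ ¬ CaseA π x

instance {k : ℕ} (π : NPartition (2*k)) : DecidablePred (FixP π) := fun x => by
  unfold FixP; infer_instance

def iota1 {k : ℕ} (π : NPartition (2*k)) (x : ((Fin (2*k) → ℕ) × ℕ) × ((Fin (2*k) → ℕ) × ℕ)) :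
    ((Fin (2*k) → ℕ) × ℕ) × ((Fin (2*k) → ℕ) × ℕ) :=
  if CaseA π x then ((x.2.1, x.2.2 + 1), x.1) else (x.2, (x.1.1, x.1.2 - 1))

lemma mem_TT {x} : x ∈ TT k π ↔ (x.1 ∈ BB k π ∧ x.2 ∈ BB k π) ∧ PT x := by
  rw [TT, Finset.mem_filter, Finset.mem_product]

lemma dd_mem {x} (hx : x ∈ TT k π) (a : Fin (2*k)) :
    (x.2.1 a : ℤ) - x.2.2 - ((x.1.1 a : ℤ) - x.1.2) = 0 ∨
    (x.2.1 a : ℤ) - x.2.2 - ((x.1.1 a : ℤ) - x.1.2) = 1 :=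
  ((mem_TT k π).1 hx).2 a

lemma TT_card_mod2 : ((TT k π).card : ZMod 2) = (((TT k π).filter (FixP π)).card : ZMod 2) := by
  classical
  refine card_filter_mod2 _ _ (iota1 π) ?_ ?_ ?_ ?_
  all_goals
    rintro ⟨⟨i, m⟩, ⟨j, l⟩⟩ hx hnp
  all_goals
    obtain ⟨⟨hb1, hb2⟩, hPT⟩ := (mem_TT k π).1 hx
    rw [mem_BB] at hb1 hb2
    simp only at hb1 hb2
    have hd : ∀ a, (j a : ℤ) - l - ((i a : ℤ) - m) = 0 ∨ (j a : ℤ) - l - ((i a : ℤ) - m) = 1 :=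
      fun a => dd_mem k π hx a
    rw [FixP, not_and_or] at hnp
    by_cases hA : CaseA π (((i, m)), ((j, l)))
    case pos =>
      have hA' : (π.toFun i : ℤ) - m < (π.toFun j : ℤ) - l := hA
      have hstep : iota1 π ((i, m), (j, l)) = ((j, l + 1), (i, m)) := if_pos hA
      first
      | -- goal 1 : membership
        (rw [hstep]
         refine (mem_TT k π).2 ⟨⟨(mem_BB k π).2 ?_, (mem_BB k π).2 ?_⟩, ?_⟩
         · show l + 1 < π.toFun j
           omega
         · exact hb1
         · intro a
           have := hd a
           simp only [Pi.sub_apply, ee]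
           push_cast
           omega)
      | -- goal 2 : not FixP
        (rw [hstep, FixP, not_and_or]
         left
         show ¬ (l + 1 = 0)
         omega)
      | -- goal 3 : involutive
        (rw [hstep, iota1, if_neg ?_]
         · show ((i, m), (j, l + 1 - 1)) = ((i,m),(j,l))
           norm_num
         · show ¬ ((π.toFun j : ℤ) - (l+1) < (π.toFun i : ℤ) - m)
           push_cast
           omega)
      | -- goal 4 : no fixed point
        (rw [hstep]
         intro heq
         have h1 : m = l + 1 := by
           have := congrArg (fun z => z.1.2) heq; simpa using this.symm
         have h2 : l = m := by
           have := congrArg (fun z => z.2.2) heq; simpa using this.symm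
         omega)
    case neg =>
      have hm : m ≠ 0 := by
        rcases hnp with h | h
        · exact h
        · exact absurd hA (by simpa using h)
      have hA' : ¬ ((π.toFun i : ℤ) - m < (π.toFun j : ℤ) - l) := hA
      have hstep : iota1 π ((i, m), (j, l)) = ((j, l), (i, m - 1)) := if_neg hA
      first
      | (rw [hstep]
         refine (mem_TT k π).2 ⟨⟨(mem_BB k π).2 ?_, (mem_BB k π).2 ?_⟩, ?_⟩
         · exact hb2
         · show m - 1 < π.toFun i
           omega
         · intro a
           have := hd a
           simp only [Pi.sub_apply, ee]
           push_cast [Nat.cast_sub (by omega : 1 ≤ m)]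
           omega)
      | (rw [hstep, FixP, not_and_or]
         right
         rw [not_not]
         show (π.toFun j : ℤ) - l < (π.toFun i : ℤ) - (m - 1 : ℕ)
         push_cast [Nat.cast_sub (by omega : 1 ≤ m)]
         omega)
      | (rw [hstep, iota1, if_pos ?_]
         · show ((i, m - 1 + 1), (j, l)) = ((i,m),(j,l))
           have : m - 1 + 1 = m := by omega
           rw [this]
         · show (π.toFun j : ℤ) - l < (π.toFun i : ℤ) - (m - 1 : ℕ)
           push_cast [Nat.cast_sub (by omega : 1 ≤ m)]
           omega)
      | (rw [hstep]
         intro heq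
         have h1 : m = l := by
           have := congrArg (fun z => z.1.2) heq; simpa using this.symm
         have h2 : l = m - 1 := by
           have := congrArg (fun z => z.2.2) heq; simpa using this.symm
         omega)


/-! ### second involution: Fix1 ≡ Fix2 ≅ FF0 -/

noncomputable def Fix1 : Finset (((Fin (2*k) → ℕ) × ℕ) × ((Fin (2*k) → ℕ) × ℕ)) :=
  (TT k π).filter (FixP π)

def Ptwo {k : ℕ} (x : ((Fin (2*k) → ℕ) × ℕ) × ((Fin (2*k) → ℕ) × ℕ)) : Prop :=
  ∀ a, x.2.1 a ≤ x.2.2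

instance {k : ℕ} : DecidablePred (Ptwo (k := k)) := fun x => by unfold Ptwo; infer_instance

def flipIdx {k : ℕ} (x : ((Fin (2*k) → ℕ) × ℕ) × ((Fin (2*k) → ℕ) × ℕ)) : Finset (Fin (2*k)) :=
  Finset.univ.filter fun a => x.2.2 < x.2.1 a

noncomputable def iota2 {k : ℕ} (x : ((Fin (2*k) → ℕ) × ℕ) × ((Fin (2*k) → ℕ) × ℕ)) :
    ((Fin (2*k) → ℕ) × ℕ) × ((Fin (2*k) → ℕ) × ℕ) :=
  if h : (flipIdx x).Nonempty then
    ((Function.update x.1.1 ((flipIdx x).min' h)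
        (if (x.2.1 ((flipIdx x).min' h) : ℤ) - x.2.2 - x.1.1 ((flipIdx x).min' h) + x.1.2 = 1
         then x.1.1 ((flipIdx x).min' h) + 1 else x.1.1 ((flipIdx x).min' h) - 1), x.1.2), x.2)
  else x

lemma pi_le (i j : Fin (2*k) → ℕ) (l : ℕ) (h : ∀ a, (i a : ℤ) ≤ (j a : ℤ) - l) :
    π.toFun j ≤ π.toFun i := by
  have h1 : ∀ a, i a ≤ (fun a => j a - l) a := fun a => by have := h a; simp only; omega
  have h2 := π.antitone h1
  have h3 := π.antitone (fun a => Nat.sub_le (j a) l : ∀ a, (fun a => j a - l) a ≤ j a)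
  omega

lemma Fix1_card_mod2 :
    ((Fix1 k π).card : ZMod 2) = (((Fix1 k π).filter (Ptwo (k := k))).card : ZMod 2) := by
  classical
  refine card_filter_mod2 _ _ iota2 ?_ ?_ ?_ ?_
  all_goals
    rintro ⟨⟨i, m⟩, ⟨j, l⟩⟩ hx hnp
  all_goals
    have hfm := Finset.mem_filter.1 hx
    have hxT := hfm.1
    have hm0 := hfm.2.1
    have hnA := hfm.2.2
    obtain ⟨⟨hb1, hb2⟩, hPT⟩ := (mem_TT k π).1 hxT
    rw [mem_BB] at hb1 hb2
    simp only at hb1 hb2 hm0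
    subst hm0
    have hd : ∀ a, (j a : ℤ) - l - (i a : ℤ) = 0 ∨ (j a : ℤ) - l - (i a : ℤ) = 1 := by
      intro a
      have := dd_mem k π hxT a
      simp only [Nat.cast_zero] at this
      omega
    have hne : (flipIdx (((i, (0:ℕ))), ((j, l)))).Nonempty := by
      rw [Ptwo] at hnp
      push_neg at hnp
      obtain ⟨a, ha⟩ := hnp
      exact ⟨a, Finset.mem_filter.2 ⟨Finset.mem_univ _, ha⟩⟩
    set a0 := (flipIdx (((i, (0:ℕ))), ((j, l)))).min' hne with ha0def
    have ha0 : l < j a0 := (Finset.mem_filter.1 ((flipIdx _).min'_mem hne)).2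
    set v : ℕ := if (j a0 : ℤ) - l - i a0 + (0:ℕ) = 1 then i a0 + 1 else i a0 - 1 with hvdef
    have hstep : iota2 (((i, (0:ℕ))), ((j, l))) = ((Function.update i a0 v, 0), (j, l)) := by
      rw [iota2, dif_pos hne]
    have hipos : (j a0 : ℤ) - l - i a0 = 0 → 1 ≤ i a0 := by intro h; omega
    have hv : ((v : ℤ) = i a0 + 1 ∧ (j a0 : ℤ) - l - i a0 = 1) ∨
              ((v : ℤ) = i a0 - 1 ∧ (j a0 : ℤ) - l - i a0 = 0) := by
      rcases hd a0 with h | h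
      · right
        constructor
        · rw [hvdef, if_neg (by push_cast; omega)]
          have := hipos h
          push_cast [Nat.cast_sub this]
          omega
        · exact h
      · left
        constructor
        · rw [hvdef, if_pos (by push_cast; omega)]
          push_cast
          omega
        · exact h
    have hdy : ∀ a, (j a : ℤ) - l - (Function.update i a0 v a : ℤ) = 0 ∨
                    (j a : ℤ) - l - (Function.update i a0 v a : ℤ) = 1 := by
      intro a
      by_cases haa : a = a0
      · subst haa
        rw [Function.update_self]
        rcases hv with ⟨h1, h2⟩ | ⟨h1, h2⟩ <;> rw [h1] <;> omega
      · rw [Function.update_of_ne haa]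
        exact hd a
    have hple : π.toFun j ≤ π.toFun (Function.update i a0 v) := by
      refine pi_le k π _ _ l fun a => ?_
      rcases hdy a with h | h <;> omega
    first
    | -- membership in Fix1
      (rw [hstep]
       refine Finset.mem_filter.2 ⟨(mem_TT k π).2 ⟨⟨(mem_BB k π).2 ?_, (mem_BB k π).2 ?_⟩, ?_⟩, ?_, ?_⟩
       · show 0 < π.toFun (Function.update i a0 v)
         omega
       · exact hb2
       · intro a
         have := hdy a
         simp only [Pi.sub_apply, ee]
         push_cast
         omega
       · rfl
       · show ¬ ((π.toFun (Function.update i a0 v) : ℤ) - (0:ℕ) < (π.toFun j : ℤ) - l)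
         push_cast
         omega)
    | -- not Ptwo
      (rw [hstep, Ptwo]
       push_neg
       exact ⟨a0, ha0⟩)
    | -- involutive
      (have hne2 : (flipIdx ((Function.update i a0 v, (0:ℕ)), (j, l))).Nonempty := hne
       have ha0eq : (flipIdx ((Function.update i a0 v, (0:ℕ)), (j, l))).min' hne2 = a0 := rfl
       rw [hstep, iota2, dif_pos hne2]
       rw [ha0eq]
       have hupdate : Function.update (Function.update i a0 v) a0
           (if (j a0 : ℤ) - l - (Function.update i a0 v a0) + (0:ℕ) = 1
            then Function.update i a0 v a0 + 1 else Function.update i a0 v a0 - 1) = i := by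
         rw [Function.update_self]
         rcases hv with ⟨h1, h2⟩ | ⟨h1, h2⟩
         · rw [if_neg (by push_cast; omega)]
           rw [Function.update_idem]
           have : v - 1 = i a0 := by omega
           rw [this, Function.update_eq_self]
         · rw [if_pos (by push_cast; omega)]
           rw [Function.update_idem]
           have : v + 1 = i a0 := by
             have := hipos h2
             omega
           rw [this, Function.update_eq_self]
       rw [hupdate])
    | -- no fixed point
      (rw [hstep]
       intro heq
       have h1 : Function.update i a0 v a0 = i a0 := by
         have := congrArg (fun z => z.1.1 a0) heq
         simpa using this
       rw [Function.update_self] at h1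
       rcases hv with ⟨hv1, hv2⟩ | ⟨hv1, hv2⟩
       · omega
       · have := hipos hv2
         omega)

noncomputable def Fix2 : Finset (((Fin (2*k) → ℕ) × ℕ) × ((Fin (2*k) → ℕ) × ℕ)) :=
  (Fix1 k π).filter (Ptwo (k := k))

lemma Fix2_card : (Fix2 k π).card = (FF0 k π).card := by
  classical
  refine Finset.card_bij (fun x _ => x.2) ?_ ?_ ?_
  · rintro ⟨⟨i, m⟩, ⟨j, l⟩⟩ hx
    obtain ⟨hx1, hP2⟩ := Finset.mem_filter.1 hx
    have hfm := Finset.mem_filter.1 hx1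
    have hxT := hfm.1
    have hm0 := hfm.2.1
    obtain ⟨⟨hb1, hb2⟩, _⟩ := (mem_TT k π).1 hxT
    simp only at hm0
    subst hm0
    have hd : ∀ a, (j a : ℤ) - l - (i a : ℤ) = 0 ∨ (j a : ℤ) - l - (i a : ℤ) = 1 := by
      intro a
      have := dd_mem k π hxT a
      simp only [Nat.cast_zero] at this
      omega
    refine Finset.mem_filter.2 ⟨hb2, ?_⟩
    funext a
    have hja : j a ≤ l := hP2 a
    have := hd a
    show (j a : ℤ) - l = 0
    omega
  · rintro ⟨⟨i1, m1⟩, b1⟩ h1 ⟨⟨i2, m2⟩, b2⟩ h2 heq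
    simp only at heq
    subst heq
    obtain ⟨h11, hP1⟩ := Finset.mem_filter.1 h1
    obtain ⟨h21, hP2⟩ := Finset.mem_filter.1 h2
    have hfm1 := Finset.mem_filter.1 h11
    have hT1 := hfm1.1
    have hm1 := hfm1.2.1
    have hfm2 := Finset.mem_filter.1 h21
    have hT2 := hfm2.1
    have hm2 := hfm2.2.1
    simp only at hm1 hm2
    subst hm1; subst hm2
    have hi1 : ∀ a, i1 a = 0 := by
      intro a
      have hd := dd_mem k π hT1 a
      have hja : b1.1 a ≤ b1.2 := hP1 a
      simp only [Nat.cast_zero] at hd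
      omega
    have hi2 : ∀ a, i2 a = 0 := by
      intro a
      have hd := dd_mem k π hT2 a
      have hja : b1.1 a ≤ b1.2 := hP2 a
      simp only [Nat.cast_zero] at hd
      omega
    have : i1 = i2 := by funext a; rw [hi1 a, hi2 a]
    rw [this]
  · rintro ⟨j, l⟩ hb
    obtain ⟨hbB, hee⟩ := Finset.mem_filter.1 hb
    rw [mem_BB] at hbB
    simp only at hbB
    have hjl : ∀ a, (j a : ℤ) = l := by
      intro a
      have := congrFun hee a
      simp only [ee, Pi.zero_apply] at this
      omega
    refine ⟨((fun _ => 0, 0), (j, l)), ?_, rfl⟩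
    have hpi0 : π.toFun j ≤ π.toFun (fun _ => 0) := π.antitone fun a => Nat.zero_le _
    refine Finset.mem_filter.2 ⟨Finset.mem_filter.2 ⟨(mem_TT k π).2 ⟨⟨(mem_BB k π).2 ?_, (mem_BB k π).2 ?_⟩, ?_⟩, ?_, ?_⟩, ?_⟩
    · show 0 < π.toFun (fun _ => 0)
      omega
    · exact hbB
    · intro a
      have := hjl a
      simp only [Pi.sub_apply, ee]
      push_cast
      omega
    · rfl
    · show ¬ ((π.toFun (fun _ => 0) : ℤ) - (0:ℕ) < (π.toFun j : ℤ) - l)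
      push_cast
      omega
    · intro a
      show j a ≤ l
      have := hjl a
      omega


lemma G_zero_even : Even ((GG k π).coeff 0) := by
  classical
  have hcast : (((GG k π).coeff 0 : ℤ) : ZMod 2) = 0 := by
    have hadd : (GG k π).coeff 0
        = (Wpi k π).coeff 0 + (QQ k π).coeff 0 := by
      rw [GG]
      exact Finsupp.add_apply _ _ _
    rw [hadd, Int.cast_add, Q_zero_mod2, W_apply k π 0]
    have hW : (((((BB k π).filter fun b => ee b = (0 : Fin (2*k) → ℤ)).card : ℤ)) : ZMod 2)
        = ((FF0 k π).card : ZMod 2) := by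
      rw [FF0]; push_cast; ring
    rw [hW, TT_card_mod2,
      show (TT k π).filter (FixP π) = Fix1 k π from rfl, Fix1_card_mod2,
      show (Fix1 k π).filter (Ptwo (k := k)) = Fix2 k π from rfl, Fix2_card]
    have : ∀ x : ZMod 2, x + x = 0 := by decide
    exact this _
  have hdvd : (2 : ℤ) ∣ (GG k π).coeff 0 := by
    exact_mod_cast (ZMod.intCast_zmod_eq_zero_iff_dvd _ 2).1 hcast
  obtain ⟨c, hc⟩ := hdvd
  exact ⟨c, by omega⟩


end CK

namespace CK

open Finset

lemma LL_ne_zero {n : ℕ} {w : Fin n → ℤ} (hw : w ≠ 0) : (∑ a, w a • lam a : RatFn n) ≠ 0 := by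
  classical
  have heq : (∑ a, w a • lam a : RatFn n)
      = algebraMap (MvPolynomial (Fin n) ℚ) (RatFn n) (∑ a, w a • MvPolynomial.X a) := by
    rw [map_sum]
    exact Finset.sum_congr rfl fun a _ =>
      (map_zsmul (algebraMap (MvPolynomial (Fin n) ℚ) (RatFn n)) (w a) (MvPolynomial.X a)).symm
  rw [heq]
  intro h
  have hinj := IsFractionRing.injective (MvPolynomial (Fin n) ℚ) (RatFn n)
  have hp : (∑ a, w a • MvPolynomial.X a : MvPolynomial (Fin n) ℚ) = 0 := by
    apply hinj
    rw [h, map_zero]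
  obtain ⟨a0, ha0⟩ := Function.ne_iff.1 hw
  have hc := congrArg (MvPolynomial.coeff (Finsupp.single a0 1)) hp
  rw [MvPolynomial.coeff_sum] at hc
  simp only [MvPolynomial.coeff_smul, MvPolynomial.coeff_X', MvPolynomial.coeff_zero] at hc
  rw [Finset.sum_eq_single a0] at hc
  · rw [if_pos rfl, zsmul_eq_mul, mul_one] at hc
    exact ha0 (by exact_mod_cast hc)
  · intro b _ hb
    rw [if_neg fun hh => hb (Finsupp.single_left_injective one_ne_zero hh), smul_zero]
  · intro hh
    exact absurd (Finset.mem_univ a0) hh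

lemma LL_neg {n : ℕ} (w : Fin n → ℤ) :
    (∑ a, (-w) a • lam a : RatFn n) = - ∑ a, w a • lam a := by
  rw [← Finset.sum_neg_distrib]
  exact Finset.sum_congr rfl fun a _ => by
    rw [Pi.neg_apply, neg_smul]

lemma zpow_finset_sum {n : ℕ} (x : RatFn n) (hx : x ≠ 0) {ι : Type*} (s : Finset ι) (f : ι → ℤ) :
    x ^ (∑ i ∈ s, f i) = ∏ i ∈ s, x ^ f i := by
  classical
  induction s using Finset.cons_induction with
  | empty => simp
  | cons a s ha ih => rw [Finset.sum_cons, Finset.prod_cons, zpow_add₀ hx, ih]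

end CK

set_option maxHeartbeats 2000000 in
theorem stmt_4 (k : ℕ) (hk : 1 ≤ k) (π : NPartition (2 * k)) :
    (((Vpi k π).coeff : (Fin (2 * k) → ℤ) →₀ ℤ) 0 = 0) ∧
    (∏ᶠ (w : Fin (2 * k) → ℤ) (_ : w ≠ 0),
        (∑ a, w a • lam a) ^ (((Vpi k π).coeff : (Fin (2 * k) → ℤ) →₀ ℤ) w) =
      (-1 : RatFn (2 * k)) ^ π.size) := by
  classical
  have hV0 : (Vpi k π).coeff 0 = 0 := by
    rw [CK.V_apply, neg_zero, sub_self]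
  refine ⟨hV0, ?_⟩
  set G : (Fin (2 * k) → ℤ) →₀ ℤ := (CK.GG k π).coeff with hGdef
  set U : Finset (Fin (2 * k) → ℤ) := G.support ∪ G.support.image Neg.neg with hUdef
  set s' : Finset (Fin (2 * k) → ℤ) := U.erase 0 with hs'def
  have hmemU : ∀ w, w ∈ U ↔ (G w ≠ 0 ∨ G (-w) ≠ 0) := by
    intro w
    rw [hUdef, Finset.mem_union, Finset.mem_image]
    constructor
    · rintro (h | ⟨u, hu, rfl⟩)
      · exact Or.inl (Finsupp.mem_support_iff.1 h)
      · rw [neg_neg]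
        exact Or.inr (Finsupp.mem_support_iff.1 hu)
    · rintro (h | h)
      · exact Or.inl (Finsupp.mem_support_iff.2 h)
      · exact Or.inr ⟨-w, Finsupp.mem_support_iff.2 h, neg_neg w⟩
  have hsym : ∀ w ∈ s', -w ∈ s' := by
    intro w hw
    rw [hs'def, Finset.mem_erase] at hw ⊢
    refine ⟨fun h => hw.1 (by simpa [neg_eq_zero] using h), ?_⟩
    rw [hmemU] at hw ⊢
    rcases hw.2 with h | h
    · exact Or.inr (by rwa [neg_neg])
    · exact Or.inl h
  have hne : ∀ w ∈ s', w ≠ (0 : Fin (2 * k) → ℤ) := fun w hw => (Finset.mem_erase.1 hw).1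
  have hVG : ∀ w, (Vpi k π).coeff w = G w - G (-w) := by
    rw [hGdef]
    exact CK.V_apply k π
  -- step 1 : finprod to finite product
  have hstep1 : (∏ᶠ (w : Fin (2 * k) → ℤ) (_ : w ≠ 0),
        (∑ a, w a • lam a) ^ ((Vpi k π).coeff w))
      = ∏ w ∈ s', (∑ a, w a • lam a) ^ ((Vpi k π).coeff w) := by
    have h1 : ∀ w : Fin (2 * k) → ℤ, (∏ᶠ (_ : w ≠ 0),
          (∑ a, w a • lam a) ^ ((Vpi k π).coeff w))
        = if w ≠ 0 then (∑ a, w a • lam a) ^ ((Vpi k π).coeff w) else 1 :=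
      fun w => finprod_eq_if
    rw [finprod_congr h1,
      finprod_eq_prod_of_mulSupport_subset _ (s := s') ?_]
    · refine Finset.prod_congr rfl fun w hw => if_pos (hne w hw)
    · intro w hw
      simp only [Function.mem_mulSupport] at hw
      by_cases hw0 : w = 0
      · subst hw0
        rw [if_neg (not_not_intro rfl)] at hw
        exact absurd rfl hw
      · rw [if_pos hw0] at hw
        rw [Finset.mem_coe, hs'def, Finset.mem_erase]
        refine ⟨hw0, (hmemU w).2 ?_⟩
        by_contra hcon
        push_neg at hcon
        apply hw
        rw [hVG, hcon.1, hcon.2, sub_zero]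
        exact zpow_zero _
  rw [hstep1]
  -- step 2 : split the zpow
  have hA : ∀ w ∈ s', (∑ a, w a • lam a : RatFn (2 * k)) ≠ 0 :=
    fun w hw => CK.LL_ne_zero (hne w hw)
  have hstep2 : ∏ w ∈ s', (∑ a, w a • lam a) ^ ((Vpi k π).coeff w)
      = (∏ w ∈ s', (∑ a, w a • lam a) ^ (G w)) *
        (∏ w ∈ s', (∑ a, w a • lam a) ^ (G (-w)))⁻¹ := by
    rw [← Finset.prod_inv_distrib, ← Finset.prod_mul_distrib]
    refine Finset.prod_congr rfl fun w hw => ?_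
    rw [hVG, zpow_sub₀ (hA w hw), div_eq_mul_inv]
  rw [hstep2]
  -- step 3 : reindex second product by neg
  have hstep3 : ∏ w ∈ s', (∑ a, w a • lam a : RatFn (2 * k)) ^ (G (-w))
      = (∏ w ∈ s', (-1 : RatFn (2 * k)) ^ (G w)) *
        ∏ w ∈ s', (∑ a, w a • lam a) ^ (G w) := by
    rw [← Finset.prod_mul_distrib]
    have hre : ∏ w ∈ s', (∑ a, w a • lam a : RatFn (2 * k)) ^ (G (-w))
        = ∏ w ∈ s', (∑ a, (-w) a • lam a : RatFn (2 * k)) ^ (G w) := by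
      refine Finset.prod_bij' (fun w _ => -w) (fun w _ => -w) (fun w hw => hsym w hw)
        (fun w hw => hsym w hw) (fun w _ => neg_neg w) (fun w _ => neg_neg w) ?_
      intro w hw
      rw [show -(-w) = w from neg_neg w]
    rw [hre]
    refine Finset.prod_congr rfl fun w hw => ?_
    rw [CK.LL_neg, neg_eq_neg_one_mul, mul_zpow]
  rw [hstep3]
  -- step 4 : cancel
  have hAne : (∏ w ∈ s', (∑ a, w a • lam a : RatFn (2 * k)) ^ (G w)) ≠ 0 :=
    Finset.prod_ne_zero_iff.2 fun w hw => zpow_ne_zero _ (hA w hw)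
  have hone : (-1 : RatFn (2 * k)) ≠ 0 := by
    exact neg_ne_zero.2 one_ne_zero
  have hstep4 : (∏ w ∈ s', (∑ a, w a • lam a : RatFn (2 * k)) ^ (G w)) *
      ((∏ w ∈ s', (-1 : RatFn (2 * k)) ^ (G w)) *
        ∏ w ∈ s', (∑ a, w a • lam a) ^ (G w))⁻¹
      = (∏ w ∈ s', (-1 : RatFn (2 * k)) ^ (G w))⁻¹ := by
    rw [mul_inv]
    rw [mul_comm ((∏ w ∈ s', (-1 : RatFn (2 * k)) ^ G w)⁻¹)]
    rw [← mul_assoc, mul_inv_cancel₀ hAne, one_mul]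
  rw [hstep4]
  -- step 5 : compute the sign
  rw [← CK.zpow_finset_sum _ hone]
  have hz : ∑ w ∈ s', G w = (π.size : ℤ) - G 0 := by
    have h0U : s' = (insert 0 U).erase 0 := by
      ext w
      simp only [hs'def, Finset.mem_erase, Finset.mem_insert]
      tauto
    rw [h0U, Finset.sum_erase_eq_sub (Finset.mem_insert_self 0 U)]
    suffices h : ∑ w ∈ insert 0 U, G w = (π.size : ℤ) by rw [h]
    have hsub : G.support ⊆ insert 0 U := fun w hw =>
      Finset.mem_insert_of_mem (Finset.mem_union_left _ hw)
    rw [← Finset.sum_subset hsub (fun w _ hw => Finsupp.notMem_support_iff.1 hw)]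
    have heps : CK.eps (CK.GG k π) = ∑ w ∈ G.support, G w := rfl
    rw [← heps, CK.eps_G k π hk]
  rw [hz]
  have hGeven : Even (G 0) := CK.G_zero_even k π
  rw [zpow_sub₀ hone, Even.neg_one_zpow hGeven]
  rw [div_one, zpow_natCast]
  refine inv_eq_of_mul_eq_one_right ?_
  rw [← pow_add]
  exact Even.neg_one_pow ⟨π.size, rfl⟩
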